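/- Let ℐ be a set of nonzero integral ideals of 𝒪 with the property that if 𝔫 ∈ ℐ and 𝔫 ⊆ 𝔪 for a nonzero integral ideal 𝔪, then 𝔪 ∈ ℐ. Let A, B : ℐ → ℂ be two arithmetic functions. Then the following are equivalent: (i) for every 𝔫 ∈ ℐ one has B(𝔫) = Σ_{𝔟 ∣ 𝔫₁} ω(𝔫, 𝔟²)·A(𝔫𝔟⁻²), the sum being over integral ideals 𝔟 dividing 𝔫₁; (ii) for every 𝔫 ∈ ℐ one has A(𝔫) = Σ_{I ⊆ S(𝔫₁)} (−1)^{#I} · (∏_{v ∈ I ∩ S₁(𝔫₁)} ω_v(𝔫₀)) · B(𝔫·∏_{v ∈ I} 𝔭_v⁻²). -/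

import Mathlib

/- Statement 0: Möbius-type inversion (Proposition `INV-F`) relating
   `B(𝔫) = Σ_{𝔟 ∣ 𝔫₁} ω(𝔫,𝔟²)·A(𝔫𝔟⁻²)` and
   `A(𝔫) = Σ_{I ⊆ S(𝔫₁)} (−1)^{#I} (∏_{v∈I∩S₁(𝔫₁)} ω_v(𝔫₀)) B(𝔫·∏_{v∈I}𝔭_v⁻²)`. -/

open NumberField UniqueFactorizationMonoid
open scoped Classical

namespace Stmt0

variable (F : Type*) [Field F] [NumberField F]

/-- `S(𝔪)`: the set of prime ideals dividing `𝔪`. -/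
noncomputable def S (𝔪 : Ideal (𝓞 F)) : Finset (Ideal (𝓞 F)) :=
  (normalizedFactors 𝔪).toFinset

/-- `ord_v(𝔪)`: the exponent of the prime `v` in `𝔪`. -/
noncomputable def ordv (v 𝔪 : Ideal (𝓞 F)) : ℕ :=
  (normalizedFactors 𝔪).count v

/-- `S_k(𝔪) = {v ∈ S(𝔪) : ord_v(𝔪) = k}`. -/
noncomputable def Sk (k : ℕ) (𝔪 : Ideal (𝓞 F)) : Finset (Ideal (𝓞 F)) :=
  (S F 𝔪).filter fun v => ordv F v 𝔪 = k

/-- `q_v`: the cardinality of the residue field `𝒪/𝔭_v`, as a real number. -/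
noncomputable def qv (v : Ideal (𝓞 F)) : ℝ := (Ideal.absNorm v : ℝ)

/-- `ω_v(𝔠) = 1` if `v ∈ S(𝔠)`, and `(q_v+1)/(q_v−1)` otherwise. -/
noncomputable def omegav (v 𝔠 : Ideal (𝓞 F)) : ℝ :=
  if v ∈ S F 𝔠 then 1 else (qv F v + 1) / (qv F v - 1)

/-- The quotient ideal `𝔫𝔟⁻¹` when `𝔟 ∣ 𝔫` (junk value `0` otherwise). -/
noncomputable def idealDiv (𝔫 𝔟 : Ideal (𝓞 F)) : Ideal (𝓞 F) :=
  if h : ∃ 𝔠, 𝔫 = 𝔟 * 𝔠 then h.choose else 0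

/-- `𝔫₁`: the unique ideal with `𝔫 = 𝔫₀𝔫₁²`, `𝔫₀` squarefree; explicitly
    `𝔫₁ = ∏_v 𝔭_v^{⌊ord_v(𝔫)/2⌋}`. -/
noncomputable def nOne (𝔫 : Ideal (𝓞 F)) : Ideal (𝓞 F) :=
  ∏ v ∈ S F 𝔫, v ^ (ordv F v 𝔫 / 2)

/-- `𝔫₀`: the largest squarefree ideal dividing `𝔫` such that `𝔫 = 𝔫₀𝔫₁²`; explicitly
    the product of the primes occurring in `𝔫` with odd exponent. -/
noncomputable def nZero (𝔫 : Ideal (𝓞 F)) : Ideal (𝓞 F) :=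
  ∏ v ∈ S F 𝔫, v ^ (ordv F v 𝔫 % 2)

/-- `ω(𝔪,𝔟) = δ(𝔪 ⊆ 𝔟) ∏_{v∈S(𝔟)} ω_v(𝔪𝔟⁻¹)`. -/
noncomputable def omega (𝔪 𝔟 : Ideal (𝓞 F)) : ℝ :=
  if 𝔪 ≤ 𝔟 then ∏ v ∈ S F 𝔟, omegav F v (idealDiv F 𝔪 𝔟) else 0


section Aux
variable {F}

abbrev Idl := Ideal (𝓞 F)

lemma mem_S {v 𝔪 : Ideal (𝓞 F)} : v ∈ S F 𝔪 ↔ v ∈ normalizedFactors 𝔪 :=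
  Multiset.mem_toFinset

lemma prime_of_mem_S {v 𝔪 : Ideal (𝓞 F)} (h : v ∈ S F 𝔪) : Prime v :=
  prime_of_normalized_factor v (mem_S.mp h)

lemma mem_S_iff_ordv_pos {v 𝔪 : Ideal (𝓞 F)} : v ∈ S F 𝔪 ↔ 0 < ordv F v 𝔪 := by
  rw [mem_S, ordv, Multiset.count_pos]

lemma ordv_mul {v a b : Ideal (𝓞 F)} (ha : a ≠ 0) (hb : b ≠ 0) :
    ordv F v (a * b) = ordv F v a + ordv F v b := by
  rw [ordv, ordv, ordv, normalizedFactors_mul ha hb, Multiset.count_add]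

lemma ordv_pow {v a : Ideal (𝓞 F)} (k : ℕ) : ordv F v (a ^ k) = k * ordv F v a := by
  rw [ordv, ordv, normalizedFactors_pow, Multiset.count_nsmul]

lemma ordv_one (v : Ideal (𝓞 F)) : ordv F v 1 = 0 := by
  rw [ordv, normalizedFactors_one]; rfl

lemma ordv_prime_self {v : Ideal (𝓞 F)} (hv : Prime v) : ordv F v v = 1 := by
  rw [ordv, normalizedFactors_irreducible hv.irreducible, normalize_eq,
    Multiset.count_singleton_self]

lemma ordv_prime_ne {v w : Ideal (𝓞 F)} (hw : Prime w) (hvw : v ≠ w) : ordv F v w = 0 := by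
  rw [ordv, normalizedFactors_irreducible hw.irreducible, normalize_eq,
    Multiset.count_singleton, if_neg hvw]

lemma prod_ordv {𝔪 : Ideal (𝓞 F)} (h : 𝔪 ≠ 0) : ∏ v ∈ S F 𝔪, v ^ ordv F v 𝔪 = 𝔪 := by
  conv_rhs => rw [← associated_iff_eq.mp (prod_normalizedFactors h)]
  rw [Finset.prod_multiset_count]
  rfl

lemma ordv_finset_prod {v : Ideal (𝓞 F)} {ι : Type*} (s : Finset ι) (f : ι → Ideal (𝓞 F))
    (hf : ∀ i ∈ s, f i ≠ 0) :
    ordv F v (∏ i ∈ s, f i) = ∑ i ∈ s, ordv F v (f i) := by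
  classical
  induction s using Finset.induction_on with
  | empty => rw [Finset.prod_empty, Finset.sum_empty, ordv_one]
  | @insert a s' hx ih =>
    rw [Finset.prod_insert hx, Finset.sum_insert hx,
      ordv_mul (hf a (Finset.mem_insert_self a s'))
        (Finset.prod_ne_zero_iff.mpr fun i hi => hf i (Finset.mem_insert_of_mem hi)),
      ih fun i hi => hf i (Finset.mem_insert_of_mem hi)]

lemma ordv_prod_pow {w : Ideal (𝓞 F)} (s : Finset (Ideal (𝓞 F)))
    (hs : ∀ v ∈ s, Prime v) (e : Ideal (𝓞 F) → ℕ) :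
    ordv F w (∏ v ∈ s, v ^ e v) = if w ∈ s then e w else 0 := by
  classical
  rw [ordv_finset_prod s _ (fun i hi => pow_ne_zero _ (hs i hi).ne_zero)]
  by_cases hw : w ∈ s
  · rw [if_pos hw, Finset.sum_eq_single w
      (fun b hb hbw => by rw [ordv_pow, ordv_prime_ne (hs b hb) hbw.symm, Nat.mul_zero])
      (fun h => absurd hw h)]
    rw [ordv_pow, ordv_prime_self (hs w hw), Nat.mul_one]
  · rw [if_neg hw, Finset.sum_eq_zero]
    intro b hb
    rw [ordv_pow, ordv_prime_ne (hs b hb) (by rintro rfl; exact hw hb), Nat.mul_zero]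

lemma eq_of_ordv {a b : Ideal (𝓞 F)} (ha : a ≠ 0) (hb : b ≠ 0)
    (h : ∀ v, Prime v → ordv F v a = ordv F v b) : a = b := by
  have hab : normalizedFactors a = normalizedFactors b := by
    ext v
    by_cases hva : v ∈ normalizedFactors a
    · exact h v (prime_of_normalized_factor v hva)
    · by_cases hvb : v ∈ normalizedFactors b
      · exact h v (prime_of_normalized_factor v hvb)
      · rw [Multiset.count_eq_zero_of_notMem hva, Multiset.count_eq_zero_of_notMem hvb]
  rw [← associated_iff_eq.mp (prod_normalizedFactors ha),
    ← associated_iff_eq.mp (prod_normalizedFactors hb), hab]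


lemma idealDiv_eq {𝔫 𝔟 𝔠 : Ideal (𝓞 F)} (h𝔟 : 𝔟 ≠ 0) (h : 𝔫 = 𝔟 * 𝔠) :
    idealDiv F 𝔫 𝔟 = 𝔠 := by
  rw [idealDiv, dif_pos ⟨𝔠, h⟩]
  exact mul_left_cancel₀ h𝔟 ((⟨𝔠, h⟩ : ∃ 𝔠, 𝔫 = 𝔟 * 𝔠).choose_spec.symm.trans h)

lemma mul_idealDiv {𝔫 𝔟 : Ideal (𝓞 F)} (h𝔟 : 𝔟 ≠ 0) (h : 𝔟 ∣ 𝔫) :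
    𝔟 * idealDiv F 𝔫 𝔟 = 𝔫 := by
  obtain ⟨𝔠, rfl⟩ := h
  rw [idealDiv_eq h𝔟 rfl]

lemma idealDiv_one (𝔫 : Ideal (𝓞 F)) : idealDiv F 𝔫 1 = 𝔫 := by
  have h1 : (1 : Ideal (𝓞 F)) ≠ 0 := by
    rw [Ideal.one_eq_top]
    exact top_ne_bot
  rw [idealDiv_eq h1 (one_mul 𝔫).symm]

lemma idealDiv_ne_zero {𝔫 𝔟 : Ideal (𝓞 F)} (h𝔫 : 𝔫 ≠ 0) (h𝔟 : 𝔟 ≠ 0) (h : 𝔟 ∣ 𝔫) :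
    idealDiv F 𝔫 𝔟 ≠ 0 := by
  intro h0
  apply h𝔫
  rw [← mul_idealDiv h𝔟 h, h0, mul_zero]

lemma ordv_idealDiv {v 𝔫 𝔟 : Ideal (𝓞 F)} (h𝔫 : 𝔫 ≠ 0) (h𝔟 : 𝔟 ≠ 0) (h : 𝔟 ∣ 𝔫) :
    ordv F v (idealDiv F 𝔫 𝔟) = ordv F v 𝔫 - ordv F v 𝔟 := by
  conv_rhs => rw [← mul_idealDiv h𝔟 h]
  rw [ordv_mul h𝔟 (idealDiv_ne_zero h𝔫 h𝔟 h), Nat.add_sub_cancel_left]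

lemma ordv_le_of_dvd {v a b : Ideal (𝓞 F)} (hb : b ≠ 0) (h : a ∣ b) :
    ordv F v a ≤ ordv F v b := by
  obtain ⟨c, rfl⟩ := h
  have ha : a ≠ 0 := fun h0 => hb (by rw [h0, zero_mul])
  have hc : c ≠ 0 := fun h0 => hb (by rw [h0, mul_zero])
  rw [ordv_mul ha hc]
  exact Nat.le_add_right _ _

lemma dvd_of_ordv_le {a b : Ideal (𝓞 F)} (ha : a ≠ 0) (hb : b ≠ 0)
    (h : ∀ v, Prime v → ordv F v a ≤ ordv F v b) : a ∣ b := by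
  rw [dvd_iff_normalizedFactors_le_normalizedFactors ha hb, Multiset.le_iff_count]
  intro v
  by_cases hva : v ∈ normalizedFactors a
  · exact h v (prime_of_normalized_factor v hva)
  · rw [Multiset.count_eq_zero_of_notMem hva]; exact Nat.zero_le _

lemma nOne_ne_zero {𝔫 : Ideal (𝓞 F)} : nOne F 𝔫 ≠ 0 :=
  Finset.prod_ne_zero_iff.mpr fun v hv => pow_ne_zero _ (prime_of_mem_S hv).ne_zero

lemma nZero_ne_zero {𝔫 : Ideal (𝓞 F)} : nZero F 𝔫 ≠ 0 :=
  Finset.prod_ne_zero_iff.mpr fun v hv => pow_ne_zero _ (prime_of_mem_S hv).ne_zero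

lemma ordv_nOne {v 𝔫 : Ideal (𝓞 F)} (hv : Prime v) :
    ordv F v (nOne F 𝔫) = ordv F v 𝔫 / 2 := by
  rw [nOne, ordv_prod_pow _ (fun w hw => prime_of_mem_S hw)]
  by_cases h : v ∈ S F 𝔫
  · rw [if_pos h]
  · rw [if_neg h]
    have : ordv F v 𝔫 = 0 := by
      by_contra h0
      exact h (mem_S_iff_ordv_pos.mpr (Nat.pos_of_ne_zero h0))
    rw [this]

lemma ordv_nZero {v 𝔫 : Ideal (𝓞 F)} (hv : Prime v) :
    ordv F v (nZero F 𝔫) = ordv F v 𝔫 % 2 := by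
  rw [nZero, ordv_prod_pow _ (fun w hw => prime_of_mem_S hw)]
  by_cases h : v ∈ S F 𝔫
  · rw [if_pos h]
  · rw [if_neg h]
    have : ordv F v 𝔫 = 0 := by
      by_contra h0
      exact h (mem_S_iff_ordv_pos.mpr (Nat.pos_of_ne_zero h0))
    rw [this]

lemma nZero_mul_nOne_sq {𝔫 : Ideal (𝓞 F)} (h𝔫 : 𝔫 ≠ 0) :
    nZero F 𝔫 * (nOne F 𝔫) ^ 2 = 𝔫 := by
  refine eq_of_ordv (mul_ne_zero nZero_ne_zero (pow_ne_zero _ nOne_ne_zero)) h𝔫 ?_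
  intro v hv
  rw [ordv_mul nZero_ne_zero (pow_ne_zero _ nOne_ne_zero), ordv_pow, ordv_nZero hv,
    ordv_nOne hv, Nat.mod_add_div (ordv F v 𝔫) 2]

lemma nOne_sq_dvd {𝔫 : Ideal (𝓞 F)} (h𝔫 : 𝔫 ≠ 0) : (nOne F 𝔫) ^ 2 ∣ 𝔫 :=
  Dvd.intro_left _ (nZero_mul_nOne_sq h𝔫)

/-- The finset of divisors of a nonzero ideal. -/
noncomputable def divisorsF (d : Ideal (𝓞 F)) : Finset (Ideal (𝓞 F)) :=
  ((normalizedFactors d).powerset.toFinset).image Multiset.prod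

lemma mem_divisorsF {d b : Ideal (𝓞 F)} (hd : d ≠ 0) : b ∈ divisorsF d ↔ b ∣ d := by
  constructor
  · rintro hb
    obtain ⟨s, hs, rfl⟩ := Finset.mem_image.mp hb
    rw [Multiset.mem_toFinset, Multiset.mem_powerset] at hs
    exact (associated_iff_eq.mp (prod_normalizedFactors hd)) ▸ Multiset.prod_dvd_prod_of_le hs
  · intro hb
    have hb0 : b ≠ 0 := fun h0 => hd (zero_dvd_iff.mp (h0 ▸ hb))
    refine Finset.mem_image.mpr ⟨normalizedFactors b, ?_, associated_iff_eq.mp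
      (prod_normalizedFactors hb0)⟩
    rw [Multiset.mem_toFinset, Multiset.mem_powerset]
    exact (dvd_iff_normalizedFactors_le_normalizedFactors hb0 hd).mp hb

lemma finsum_dvd_eq_sum_divisorsF {d : Ideal (𝓞 F)} (hd : d ≠ 0) (f : Ideal (𝓞 F) → ℂ) :
    (∑ᶠ (𝔟 : Ideal (𝓞 F)) (_ : 𝔟 ∣ d), f 𝔟) = ∑ 𝔟 ∈ divisorsF d, f 𝔟 := by
  have hset : {b : Ideal (𝓞 F) | b ∣ d} = ↑(divisorsF d) := by
    ext b
    simp [mem_divisorsF hd]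
  calc (∑ᶠ (𝔟 : Ideal (𝓞 F)) (_ : 𝔟 ∣ d), f 𝔟)
      = ∑ᶠ (𝔟 : Ideal (𝓞 F)) (_ : 𝔟 ∈ {b : Ideal (𝓞 F) | b ∣ d}), f 𝔟 := rfl
    _ = ∑ 𝔟 ∈ divisorsF d, f 𝔟 := by rw [hset, finsum_mem_coe_finset]


section NI
variable {𝔫 : Ideal (𝓞 F)} {I : Finset (Ideal (𝓞 F))}

lemma prime_of_mem_I (hI : I ⊆ S F (nOne F 𝔫)) {v : Ideal (𝓞 F)} (hv : v ∈ I) : Prime v :=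
  prime_of_mem_S (hI hv)

lemma pI_ne_zero (hI : I ⊆ S F (nOne F 𝔫)) : (∏ v ∈ I, v) ≠ 0 :=
  Finset.prod_ne_zero_iff.mpr fun v hv => (prime_of_mem_I hI hv).ne_zero

lemma normalizedFactors_pI (hI : I ⊆ S F (nOne F 𝔫)) :
    normalizedFactors (∏ v ∈ I, v) = I.val := by
  have : (∏ v ∈ I, v) = I.val.prod := (Finset.prod_val I).symm ▸ rfl
  rw [this, normalizedFactors_prod_of_prime (fun v hv => prime_of_mem_I hI hv)]

lemma ordv_pI (hI : I ⊆ S F (nOne F 𝔫)) (v : Ideal (𝓞 F)) :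
    ordv F v (∏ w ∈ I, w) = if v ∈ I then 1 else 0 := by
  rw [ordv, normalizedFactors_pI hI]
  by_cases h : v ∈ I
  · rw [if_pos h, Multiset.count_eq_one_of_mem I.nodup h]
  · rw [if_neg h, Multiset.count_eq_zero_of_notMem h]

lemma pI_dvd_nOne (h𝔫 : 𝔫 ≠ 0) (hI : I ⊆ S F (nOne F 𝔫)) : (∏ v ∈ I, v) ∣ nOne F 𝔫 := by
  refine dvd_of_ordv_le (pI_ne_zero hI) nOne_ne_zero fun v hv => ?_
  rw [ordv_pI hI]
  by_cases h : v ∈ I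
  · rw [if_pos h]
    exact mem_S_iff_ordv_pos.mp (hI h)
  · rw [if_neg h]; exact Nat.zero_le _

lemma pI_sq_dvd (h𝔫 : 𝔫 ≠ 0) (hI : I ⊆ S F (nOne F 𝔫)) : (∏ v ∈ I, v) ^ 2 ∣ 𝔫 :=
  dvd_trans (pow_dvd_pow_of_dvd (pI_dvd_nOne h𝔫 hI) 2) (nOne_sq_dvd h𝔫)

lemma nI_ne_zero (h𝔫 : 𝔫 ≠ 0) (hI : I ⊆ S F (nOne F 𝔫)) :
    idealDiv F 𝔫 ((∏ v ∈ I, v) ^ 2) ≠ 0 :=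
  idealDiv_ne_zero h𝔫 (pow_ne_zero _ (pI_ne_zero hI)) (pI_sq_dvd h𝔫 hI)

lemma ordv_nI (h𝔫 : 𝔫 ≠ 0) (hI : I ⊆ S F (nOne F 𝔫)) (v : Ideal (𝓞 F)) :
    ordv F v (idealDiv F 𝔫 ((∏ w ∈ I, w) ^ 2)) =
      ordv F v 𝔫 - 2 * (if v ∈ I then 1 else 0) := by
  rw [ordv_idealDiv h𝔫 (pow_ne_zero _ (pI_ne_zero hI)) (pI_sq_dvd h𝔫 hI), ordv_pow,
    ordv_pI hI]

lemma two_le_ordv_of_mem_I (h𝔫 : 𝔫 ≠ 0) (hI : I ⊆ S F (nOne F 𝔫)) {v : Ideal (𝓞 F)}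
    (hv : v ∈ I) : 2 ≤ ordv F v 𝔫 := by
  have h1 : 0 < ordv F v (nOne F 𝔫) := mem_S_iff_ordv_pos.mp (hI hv)
  rw [ordv_nOne (prime_of_mem_I hI hv)] at h1
  omega

lemma nOne_nI (h𝔫 : 𝔫 ≠ 0) (hI : I ⊆ S F (nOne F 𝔫)) :
    nOne F (idealDiv F 𝔫 ((∏ w ∈ I, w) ^ 2)) = idealDiv F (nOne F 𝔫) (∏ w ∈ I, w) := by
  refine eq_of_ordv nOne_ne_zero
    (idealDiv_ne_zero nOne_ne_zero (pI_ne_zero hI) (pI_dvd_nOne h𝔫 hI)) fun v hv => ?_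
  rw [ordv_nOne hv, ordv_nI h𝔫 hI, ordv_idealDiv nOne_ne_zero (pI_ne_zero hI)
    (pI_dvd_nOne h𝔫 hI), ordv_nOne hv, ordv_pI hI]
  by_cases h : v ∈ I
  · have := two_le_ordv_of_mem_I h𝔫 hI h
    rw [if_pos h]
    omega
  · rw [if_neg h]
    omega

lemma nZero_nI (h𝔫 : 𝔫 ≠ 0) (hI : I ⊆ S F (nOne F 𝔫)) :
    nZero F (idealDiv F 𝔫 ((∏ w ∈ I, w) ^ 2)) = nZero F 𝔫 := by
  refine eq_of_ordv nZero_ne_zero nZero_ne_zero fun v hv => ?_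
  rw [ordv_nZero hv, ordv_nZero hv, ordv_nI h𝔫 hI]
  by_cases h : v ∈ I
  · have := two_le_ordv_of_mem_I h𝔫 hI h
    rw [if_pos h]
    omega
  · rw [if_neg h]
    omega

lemma card_nI (h𝔫 : 𝔫 ≠ 0) (hI : I ⊆ S F (nOne F 𝔫)) :
    (normalizedFactors (nOne F (idealDiv F 𝔫 ((∏ w ∈ I, w) ^ 2)))).card + I.card =
      (normalizedFactors (nOne F 𝔫)).card := by
  have h : (∏ w ∈ I, w) * nOne F (idealDiv F 𝔫 ((∏ w ∈ I, w) ^ 2)) = nOne F 𝔫 := by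
    rw [nOne_nI h𝔫 hI]
    exact mul_idealDiv (pI_ne_zero hI) (pI_dvd_nOne h𝔫 hI)
  conv_rhs => rw [← h]
  rw [normalizedFactors_mul (pI_ne_zero hI) nOne_ne_zero, Multiset.card_add,
    normalizedFactors_pI hI]
  simp [add_comm]

lemma le_nI (h𝔫 : 𝔫 ≠ 0) (hI : I ⊆ S F (nOne F 𝔫)) :
    𝔫 ≤ idealDiv F 𝔫 ((∏ w ∈ I, w) ^ 2) := by
  conv_lhs => rw [← mul_idealDiv (pow_ne_zero _ (pI_ne_zero hI)) (pI_sq_dvd h𝔫 hI)]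
  exact Ideal.mul_le_right

end NI


section Core

lemma S_subset_of_dvd {a b : Ideal (𝓞 F)} (hb : b ≠ 0) (h : a ∣ b) : S F a ⊆ S F b := by
  intro v hv
  rw [mem_S_iff_ordv_pos] at hv ⊢
  exact lt_of_lt_of_le hv (ordv_le_of_dvd hb h)

lemma S_sq {b : Ideal (𝓞 F)} : S F (b ^ 2) = S F b := by
  ext v
  rw [mem_S_iff_ordv_pos, mem_S_iff_ordv_pos, ordv_pow]
  omega

lemma eq_one_of_S_empty {c : Ideal (𝓞 F)} (hc : c ≠ 0) (h : S F c = ∅) : c = 1 := by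
  have h0 : normalizedFactors c = 0 := by rwa [S, Multiset.toFinset_eq_empty] at h
  rw [← associated_iff_eq.mp (prod_normalizedFactors hc), h0, Multiset.prod_zero]

lemma sq_dvd_of_dvd_nOne {𝔫 : Ideal (𝓞 F)} (h𝔫 : 𝔫 ≠ 0) {𝔠 : Ideal (𝓞 F)}
    (hc : 𝔠 ∣ nOne F 𝔫) : 𝔠 ^ 2 ∣ 𝔫 := by
  have hc0 : 𝔠 ≠ 0 := fun h0 => nOne_ne_zero (zero_dvd_iff.mp (h0 ▸ hc))
  refine dvd_of_ordv_le (pow_ne_zero _ hc0) h𝔫 fun v hv => ?_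
  have h1 := ordv_le_of_dvd (v := v) (nOne_ne_zero (𝔫 := 𝔫)) hc
  rw [ordv_nOne hv] at h1
  rw [ordv_pow]
  omega

lemma d_ne_zero {𝔫 : Ideal (𝓞 F)} (h𝔫 : 𝔫 ≠ 0) {𝔠 : Ideal (𝓞 F)} (hc : 𝔠 ∣ nOne F 𝔫) :
    idealDiv F 𝔫 (𝔠 ^ 2) ≠ 0 :=
  idealDiv_ne_zero h𝔫 (pow_ne_zero _ (fun h0 => nOne_ne_zero (zero_dvd_iff.mp (h0 ▸ hc))))
    (sq_dvd_of_dvd_nOne h𝔫 hc)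

lemma ordv_d {𝔫 : Ideal (𝓞 F)} (h𝔫 : 𝔫 ≠ 0) {𝔠 : Ideal (𝓞 F)} (hc : 𝔠 ∣ nOne F 𝔫)
    (v : Ideal (𝓞 F)) :
    ordv F v (idealDiv F 𝔫 (𝔠 ^ 2)) = ordv F v 𝔫 - 2 * ordv F v 𝔠 := by
  have hc0 : 𝔠 ≠ 0 := fun h0 => nOne_ne_zero (zero_dvd_iff.mp (h0 ▸ hc))
  rw [ordv_idealDiv h𝔫 (pow_ne_zero _ hc0) (sq_dvd_of_dvd_nOne h𝔫 hc), ordv_pow]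

end Core

variable (F) in
/-- Local factor `y`. -/
noncomputable def yF (m c w : Ideal (𝓞 F)) : ℂ := (omegav F w (idealDiv F m (c ^ 2)) : ℂ)

variable (F) in
/-- Local factor `x`. -/
noncomputable def xF (m c w : Ideal (𝓞 F)) : ℂ :=
  -((if ordv F w (nOne F m) = 1 then (omegav F w (nZero F m) : ℂ) else 1) *
    (if ordv F w c = 1 then 1 else (omegav F w (idealDiv F m (c ^ 2)) : ℂ)))

lemma xy_cancel {𝔫 : Ideal (𝓞 F)} (h𝔫 : 𝔫 ≠ 0) {𝔠 : Ideal (𝓞 F)} (hc : 𝔠 ∣ nOne F 𝔫)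
    {v : Ideal (𝓞 F)} (hv : v ∈ S F 𝔠) : xF F 𝔫 𝔠 v + yF F 𝔫 𝔠 v = 0 := by
  have hvp : Prime v := prime_of_mem_S hv
  have h1 : 0 < ordv F v 𝔠 := mem_S_iff_ordv_pos.mp hv
  have h2 : ordv F v 𝔠 ≤ ordv F v (nOne F 𝔫) := ordv_le_of_dvd nOne_ne_zero hc
  rw [ordv_nOne hvp] at h2
  have hd : ordv F v (idealDiv F 𝔫 (𝔠 ^ 2)) = ordv F v 𝔫 - 2 * ordv F v 𝔠 :=
    ordv_d h𝔫 hc v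
  rw [xF, yF, neg_add_eq_zero]
  by_cases hn1 : ordv F v 𝔫 / 2 = 1
  · have hc1 : ordv F v 𝔠 = 1 := by omega
    rw [ordv_nOne hvp, if_pos hn1, if_pos hc1, mul_one]
    have hmem : (v ∈ S F (nZero F 𝔫)) ↔ v ∈ S F (idealDiv F 𝔫 (𝔠 ^ 2)) := by
      rw [mem_S_iff_ordv_pos, mem_S_iff_ordv_pos, hd, ordv_nZero hvp]
      omega
    have heq : omegav F v (nZero F 𝔫) = omegav F v (idealDiv F 𝔫 (𝔠 ^ 2)) := by
      rw [omegav, omegav, if_congr hmem rfl rfl]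
    rw [heq]
  · have hn2 : 2 ≤ ordv F v 𝔫 / 2 := by omega
    rw [ordv_nOne hvp, if_neg hn1, one_mul]
    by_cases hc1 : ordv F v 𝔠 = 1
    · rw [if_pos hc1]
      have hmem : v ∈ S F (idealDiv F 𝔫 (𝔠 ^ 2)) := by
        rw [mem_S_iff_ordv_pos, hd]
        omega
      rw [omegav, if_pos hmem, Complex.ofReal_one]
    · rw [if_neg hc1]




lemma hval (A : Ideal (𝓞 F) → ℂ) {𝔫 : Ideal (𝓞 F)} (h𝔫 : 𝔫 ≠ 0)
    {I : Finset (Ideal (𝓞 F))} (hI : I ⊆ S F (nOne F 𝔫)) {𝔟 : Ideal (𝓞 F)}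
    (hb : 𝔟 ∣ idealDiv F (nOne F 𝔫) (∏ v ∈ I, v)) :
    (-1 : ℂ) ^ I.card * (∏ v ∈ I ∩ Sk F 1 (nOne F 𝔫), (omegav F v (nZero F 𝔫) : ℂ)) *
      ((omega F (idealDiv F 𝔫 ((∏ v ∈ I, v) ^ 2)) (𝔟 ^ 2) : ℂ) *
        A (idealDiv F (idealDiv F 𝔫 ((∏ v ∈ I, v) ^ 2)) (𝔟 ^ 2))) =
    (∏ v ∈ I, xF F 𝔫 (𝔟 * ∏ w ∈ I, w) v) *
      (∏ v ∈ S F (𝔟 * ∏ w ∈ I, w) \ I, yF F 𝔫 (𝔟 * ∏ w ∈ I, w) v) *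
      A (idealDiv F 𝔫 ((𝔟 * ∏ w ∈ I, w) ^ 2)) := by
  classical
  set pI : Ideal (𝓞 F) := ∏ w ∈ I, w with hpI
  have hpI0 : pI ≠ 0 := pI_ne_zero hI
  have hQ1 : nOne F (idealDiv F 𝔫 (pI ^ 2)) = idealDiv F (nOne F 𝔫) pI := nOne_nI h𝔫 hI
  have hb' : 𝔟 ∣ nOne F (idealDiv F 𝔫 (pI ^ 2)) := hQ1 ▸ hb
  have hnI0 : idealDiv F 𝔫 (pI ^ 2) ≠ 0 := nI_ne_zero h𝔫 hI
  have hb0 : 𝔟 ≠ 0 := fun h0 => nOne_ne_zero (zero_dvd_iff.mp (h0 ▸ hb'))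
  set 𝔠 : Ideal (𝓞 F) := 𝔟 * pI with hc
  have hc0 : 𝔠 ≠ 0 := mul_ne_zero hb0 hpI0
  have hcdvd : 𝔠 ∣ nOne F 𝔫 := by
    obtain ⟨k, hk⟩ := hb
    refine ⟨k, ?_⟩
    rw [← mul_idealDiv hpI0 (pI_dvd_nOne h𝔫 hI), hk, hc]
    ring
  have hbsq : 𝔟 ^ 2 ∣ idealDiv F 𝔫 (pI ^ 2) := sq_dvd_of_dvd_nOne hnI0 hb'
  have e1 := mul_idealDiv (pow_ne_zero 2 hb0) hbsq
  have e2 := mul_idealDiv (pow_ne_zero 2 hpI0) (pI_sq_dvd h𝔫 hI)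
  have ha : idealDiv F (idealDiv F 𝔫 (pI ^ 2)) (𝔟 ^ 2) = idealDiv F 𝔫 (𝔠 ^ 2) := by
    refine (idealDiv_eq (pow_ne_zero 2 hc0) ?_).symm
    calc 𝔫 = pI ^ 2 * idealDiv F 𝔫 (pI ^ 2) := e2.symm
      _ = pI ^ 2 * (𝔟 ^ 2 * idealDiv F (idealDiv F 𝔫 (pI ^ 2)) (𝔟 ^ 2)) := by rw [e1]
      _ = 𝔠 ^ 2 * idealDiv F (idealDiv F 𝔫 (pI ^ 2)) (𝔟 ^ 2) := by rw [hc]; ring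
  have homega : (omega F (idealDiv F 𝔫 (pI ^ 2)) (𝔟 ^ 2)) =
      ∏ v ∈ S F 𝔟, omegav F v (idealDiv F 𝔫 (𝔠 ^ 2)) := by
    rw [omega, if_pos (Ideal.le_of_dvd hbsq), S_sq, ha]
  have hordc : ∀ v, ordv F v 𝔠 = ordv F v 𝔟 + (if v ∈ I then 1 else 0) := fun v => by
    rw [hc, ordv_mul hb0 hpI0, ordv_pI hI]
  -- decomposition of S F 𝔟
  have hSb : S F 𝔟 = (S F 𝔠 \ I) ∪ I.filter (fun v => ¬ (ordv F v 𝔠 = 1)) := by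
    ext v
    simp only [Finset.mem_union, Finset.mem_sdiff, Finset.mem_filter, mem_S_iff_ordv_pos]
    have hv := hordc v
    by_cases hvI : v ∈ I
    · rw [if_pos hvI] at hv
      simp only [hvI, not_true_eq_false, and_false, false_and, and_true, true_and, false_or]
      omega
    · rw [if_neg hvI] at hv
      simp only [hvI, not_false_eq_true, and_true, false_and, and_false, or_false]
      omega
  have hdisj : Disjoint (S F 𝔠 \ I) (I.filter (fun v => ¬ (ordv F v 𝔠 = 1))) := by
    rw [Finset.disjoint_left]
    intro v hv1 hv2
    exact (Finset.mem_sdiff.mp hv1).2 (Finset.mem_filter.mp hv2).1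
  have hIS : I ∩ Sk F 1 (nOne F 𝔫) = I.filter (fun v => ordv F v (nOne F 𝔫) = 1) := by
    ext v
    simp only [Finset.mem_inter, Finset.mem_filter, Sk]
    exact ⟨fun ⟨h1, _, h3⟩ => ⟨h1, h3⟩, fun ⟨h1, h2⟩ => ⟨h1, hI h1, h2⟩⟩
  have hx : ∏ v ∈ I, xF F 𝔫 𝔠 v =
      (-1 : ℂ) ^ I.card * (∏ v ∈ I ∩ Sk F 1 (nOne F 𝔫), (omegav F v (nZero F 𝔫) : ℂ)) *
        ∏ v ∈ I.filter (fun v => ¬ (ordv F v 𝔠 = 1)),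
          (omegav F v (idealDiv F 𝔫 (𝔠 ^ 2)) : ℂ) := by
    have step : ∏ v ∈ I, xF F 𝔫 𝔠 v =
        (∏ _v ∈ I, (-1 : ℂ)) *
          (∏ v ∈ I, (if ordv F v (nOne F 𝔫) = 1 then (omegav F v (nZero F 𝔫) : ℂ) else 1)) *
          (∏ v ∈ I,
            (if ¬ (ordv F v 𝔠 = 1) then (omegav F v (idealDiv F 𝔫 (𝔠 ^ 2)) : ℂ) else 1)) := by
      rw [← Finset.prod_mul_distrib, ← Finset.prod_mul_distrib]
      refine Finset.prod_congr rfl fun v _ => ?_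
      by_cases h : ordv F v 𝔠 = 1
      · rw [xF, if_pos h, if_neg (not_not_intro h)]
        ring
      · rw [xF, if_neg h, if_pos h]
        ring
    rw [step, Finset.prod_const, hIS, Finset.prod_filter, Finset.prod_filter]
  have hy : ∏ v ∈ S F 𝔟, (omegav F v (idealDiv F 𝔫 (𝔠 ^ 2)) : ℂ) =
      (∏ v ∈ S F 𝔠 \ I, yF F 𝔫 𝔠 v) *
        ∏ v ∈ I.filter (fun v => ¬ (ordv F v 𝔠 = 1)),
          (omegav F v (idealDiv F 𝔫 (𝔠 ^ 2)) : ℂ) := by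
    rw [hSb, Finset.prod_union hdisj]
    rfl
  rw [ha, homega, Complex.ofReal_prod, hx, hy]
  ring


lemma sum_powerset_eq (A : Ideal (𝓞 F) → ℂ) {𝔫 : Ideal (𝓞 F)} (h𝔫 : 𝔫 ≠ 0)
    {𝔠 : Ideal (𝓞 F)} (hc : 𝔠 ∣ nOne F 𝔫) :
    ∑ I ∈ (S F 𝔠).powerset,
      (∏ v ∈ I, xF F 𝔫 𝔠 v) * (∏ v ∈ S F 𝔠 \ I, yF F 𝔫 𝔠 v) *
        A (idealDiv F 𝔫 (𝔠 ^ 2)) = if 𝔠 = 1 then A 𝔫 else 0 := by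
  classical
  have hc0 : 𝔠 ≠ 0 := fun h0 => nOne_ne_zero (zero_dvd_iff.mp (h0 ▸ hc))
  rw [← Finset.sum_mul, ← Finset.prod_add]
  by_cases h1 : 𝔠 = 1
  · rw [if_pos h1, h1]
    have hS1 : S F (1 : Ideal (𝓞 F)) = ∅ := by
      rw [S, normalizedFactors_one]
      rfl
    rw [hS1, Finset.prod_empty, one_mul, one_pow, idealDiv_one]
  · rw [if_neg h1]
    have hne : (S F 𝔠).Nonempty := by
      rw [Finset.nonempty_iff_ne_empty]
      exact fun h => h1 (eq_one_of_S_empty hc0 h)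
    obtain ⟨v, hv⟩ := hne
    rw [Finset.prod_eq_zero hv (xy_cancel h𝔫 hc hv), zero_mul]

set_option maxHeartbeats 2000000 in
lemma E1 (A : Ideal (𝓞 F) → ℂ) {𝔫 : Ideal (𝓞 F)} (h𝔫 : 𝔫 ≠ 0) :
    ∑ I ∈ (S F (nOne F 𝔫)).powerset,
      (-1 : ℂ) ^ I.card *
        (∏ v ∈ I ∩ Sk F 1 (nOne F 𝔫), (omegav F v (nZero F 𝔫) : ℂ)) *
        (∑ᶠ (𝔟 : Ideal (𝓞 F)) (_ : 𝔟 ∣ nOne F (idealDiv F 𝔫 (∏ v ∈ I, v ^ 2))),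
          (omega F (idealDiv F 𝔫 (∏ v ∈ I, v ^ 2)) (𝔟 ^ 2) : ℂ) *
            A (idealDiv F (idealDiv F 𝔫 (∏ v ∈ I, v ^ 2)) (𝔟 ^ 2))) = A 𝔫 := by
  classical
  have step1 : ∀ I ∈ (S F (nOne F 𝔫)).powerset,
      (-1 : ℂ) ^ I.card *
        (∏ v ∈ I ∩ Sk F 1 (nOne F 𝔫), (omegav F v (nZero F 𝔫) : ℂ)) *
        (∑ᶠ (𝔟 : Ideal (𝓞 F)) (_ : 𝔟 ∣ nOne F (idealDiv F 𝔫 (∏ v ∈ I, v ^ 2))),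
          (omega F (idealDiv F 𝔫 (∏ v ∈ I, v ^ 2)) (𝔟 ^ 2) : ℂ) *
            A (idealDiv F (idealDiv F 𝔫 (∏ v ∈ I, v ^ 2)) (𝔟 ^ 2))) =
      ∑ 𝔠 ∈ (divisorsF (nOne F 𝔫)).filter (fun 𝔠 => I ⊆ S F 𝔠),
        (∏ v ∈ I, xF F 𝔫 𝔠 v) * (∏ v ∈ S F 𝔠 \ I, yF F 𝔫 𝔠 v) *
          A (idealDiv F 𝔫 (𝔠 ^ 2)) := by
    intro I hIp
    have hI : I ⊆ S F (nOne F 𝔫) := Finset.mem_powerset.mp hIp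
    have hpI0 : (∏ w ∈ I, w) ≠ 0 := pI_ne_zero hI
    rw [Finset.prod_pow]
    rw [finsum_dvd_eq_sum_divisorsF nOne_ne_zero, nOne_nI h𝔫 hI, Finset.mul_sum]
    have hDne : idealDiv F (nOne F 𝔫) (∏ w ∈ I, w) ≠ 0 :=
      idealDiv_ne_zero nOne_ne_zero hpI0 (pI_dvd_nOne h𝔫 hI)
    refine Finset.sum_nbij' (fun 𝔟 => 𝔟 * ∏ w ∈ I, w) (fun 𝔠 => idealDiv F 𝔠 (∏ w ∈ I, w))
      ?_ ?_ ?_ ?_ ?_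
    · intro 𝔟 hm
      rw [mem_divisorsF hDne] at hm
      have hb0 : 𝔟 ≠ 0 := fun h0 => hDne (zero_dvd_iff.mp (h0 ▸ hm))
      rw [Finset.mem_filter, mem_divisorsF nOne_ne_zero]
      constructor
      · obtain ⟨k, hk⟩ := hm
        exact ⟨k, by rw [← mul_idealDiv hpI0 (pI_dvd_nOne h𝔫 hI), hk]; ring⟩
      · intro v hvI
        rw [mem_S_iff_ordv_pos, ordv_mul hb0 hpI0, ordv_pI hI, if_pos hvI]
        omega
    · intro 𝔠 hct
      rw [Finset.mem_filter, mem_divisorsF nOne_ne_zero] at hct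
      obtain ⟨hcd, hcS⟩ := hct
      have hc0 : 𝔠 ≠ 0 := fun h0 => nOne_ne_zero (zero_dvd_iff.mp (h0 ▸ hcd))
      have hpIc : (∏ w ∈ I, w) ∣ 𝔠 := by
        refine dvd_of_ordv_le hpI0 hc0 fun v _ => ?_
        rw [ordv_pI hI]
        by_cases hvI : v ∈ I
        · rw [if_pos hvI]
          exact mem_S_iff_ordv_pos.mp (hcS hvI)
        · rw [if_neg hvI]
          exact Nat.zero_le _
      rw [mem_divisorsF hDne]
      refine dvd_of_ordv_le (idealDiv_ne_zero hc0 hpI0 hpIc) hDne fun v hv => ?_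
      rw [ordv_idealDiv hc0 hpI0 hpIc, ordv_idealDiv nOne_ne_zero hpI0 (pI_dvd_nOne h𝔫 hI)]
      have := ordv_le_of_dvd (v := v) (nOne_ne_zero (𝔫 := 𝔫)) hcd
      omega
    · intro 𝔟 hm
      rw [mem_divisorsF hDne] at hm
      have hb0 : 𝔟 ≠ 0 := fun h0 => hDne (zero_dvd_iff.mp (h0 ▸ hm))
      exact idealDiv_eq hpI0 (mul_comm 𝔟 _)
    · intro 𝔠 hct
      rw [Finset.mem_filter, mem_divisorsF nOne_ne_zero] at hct
      obtain ⟨hcd, hcS⟩ := hct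
      have hc0 : 𝔠 ≠ 0 := fun h0 => nOne_ne_zero (zero_dvd_iff.mp (h0 ▸ hcd))
      have hpIc : (∏ w ∈ I, w) ∣ 𝔠 := by
        refine dvd_of_ordv_le hpI0 hc0 fun v _ => ?_
        rw [ordv_pI hI]
        by_cases hvI : v ∈ I
        · rw [if_pos hvI]
          exact mem_S_iff_ordv_pos.mp (hcS hvI)
        · rw [if_neg hvI]
          exact Nat.zero_le _
      show idealDiv F 𝔠 (∏ w ∈ I, w) * ∏ w ∈ I, w = 𝔠
      rw [mul_comm]
      exact mul_idealDiv hpI0 hpIc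
    · intro 𝔟 hm
      rw [mem_divisorsF hDne] at hm
      exact hval A h𝔫 hI hm
  rw [Finset.sum_congr rfl step1]
  have step2 : ∀ I ∈ (S F (nOne F 𝔫)).powerset,
      (∑ 𝔠 ∈ (divisorsF (nOne F 𝔫)).filter (fun 𝔠 => I ⊆ S F 𝔠),
        (∏ v ∈ I, xF F 𝔫 𝔠 v) * (∏ v ∈ S F 𝔠 \ I, yF F 𝔫 𝔠 v) *
          A (idealDiv F 𝔫 (𝔠 ^ 2))) =
      ∑ 𝔠 ∈ divisorsF (nOne F 𝔫), if I ⊆ S F 𝔠 then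
        (∏ v ∈ I, xF F 𝔫 𝔠 v) * (∏ v ∈ S F 𝔠 \ I, yF F 𝔫 𝔠 v) *
          A (idealDiv F 𝔫 (𝔠 ^ 2)) else 0 := fun I _ => Finset.sum_filter _ _
  rw [Finset.sum_congr rfl step2, Finset.sum_comm]
  have step3 : ∀ 𝔠 ∈ divisorsF (nOne F 𝔫),
      (∑ I ∈ (S F (nOne F 𝔫)).powerset, if I ⊆ S F 𝔠 then
        (∏ v ∈ I, xF F 𝔫 𝔠 v) * (∏ v ∈ S F 𝔠 \ I, yF F 𝔫 𝔠 v) *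
          A (idealDiv F 𝔫 (𝔠 ^ 2)) else 0) = if 𝔠 = 1 then A 𝔫 else 0 := by
    intro 𝔠 hcd
    rw [mem_divisorsF nOne_ne_zero] at hcd
    have hc0 : 𝔠 ≠ 0 := fun h0 => nOne_ne_zero (zero_dvd_iff.mp (h0 ▸ hcd))
    rw [← Finset.sum_filter]
    have hps : (S F (nOne F 𝔫)).powerset.filter (fun I => I ⊆ S F 𝔠) =
        (S F 𝔠).powerset := by
      ext I
      simp only [Finset.mem_filter, Finset.mem_powerset]
      exact ⟨fun ⟨_, h2⟩ => h2, fun h => ⟨h.trans (S_subset_of_dvd nOne_ne_zero hcd), h⟩⟩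
    rw [hps]
    exact sum_powerset_eq A h𝔫 hcd
  rw [Finset.sum_congr rfl step3]
  rw [Finset.sum_eq_single_of_mem (1 : Ideal (𝓞 F))
    ((mem_divisorsF nOne_ne_zero).mpr (one_dvd _)) (fun 𝔠 _ h => if_neg h)]
  rw [if_pos rfl]

end Aux

set_option maxHeartbeats 2000000 in
theorem statement0
    (hF : ∀ v : NumberField.InfinitePlace F, v.IsReal)
    (ℐ : Set (Ideal (𝓞 F)))
    (hℐ0 : ∀ 𝔫 ∈ ℐ, 𝔫 ≠ 0)
    (hℐup : ∀ 𝔫 ∈ ℐ, ∀ 𝔪 : Ideal (𝓞 F), 𝔪 ≠ 0 → 𝔫 ≤ 𝔪 → 𝔪 ∈ ℐ)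
    (A B : Ideal (𝓞 F) → ℂ) :
    (∀ 𝔫 ∈ ℐ,
        B 𝔫 = ∑ᶠ (𝔟 : Ideal (𝓞 F)) (_ : 𝔟 ∣ nOne F 𝔫),
          (omega F 𝔫 (𝔟 ^ 2) : ℂ) * A (idealDiv F 𝔫 (𝔟 ^ 2)))
    ↔
    (∀ 𝔫 ∈ ℐ,
        A 𝔫 = ∑ I ∈ (S F (nOne F 𝔫)).powerset,
          (-1 : ℂ) ^ I.card *
            (∏ v ∈ I ∩ Sk F 1 (nOne F 𝔫), (omegav F v (nZero F 𝔫) : ℂ)) *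
            B (idealDiv F 𝔫 (∏ v ∈ I, v ^ 2))) := by
  classical
  constructor
  · intro h1 𝔫 h𝔫I
    have h𝔫 := hℐ0 𝔫 h𝔫I
    rw [← E1 A h𝔫]
    refine Finset.sum_congr rfl fun I hIp => ?_
    have hI := Finset.mem_powerset.mp hIp
    have hmem : idealDiv F 𝔫 (∏ v ∈ I, v ^ 2) ∈ ℐ := by
      rw [Finset.prod_pow]
      exact hℐup 𝔫 h𝔫I _ (nI_ne_zero h𝔫 hI) (le_nI h𝔫 hI)
    rw [h1 _ hmem]
  · intro h2
    have key : ∀ k : ℕ, ∀ 𝔫 ∈ ℐ, (normalizedFactors (nOne F 𝔫)).card = k →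
        B 𝔫 = ∑ᶠ (𝔟 : Ideal (𝓞 F)) (_ : 𝔟 ∣ nOne F 𝔫),
          (omega F 𝔫 (𝔟 ^ 2) : ℂ) * A (idealDiv F 𝔫 (𝔟 ^ 2)) := by
      intro k
      induction k using Nat.strong_induction_on with
      | _ k ih =>
        intro 𝔫 h𝔫I hk
        have h𝔫 := hℐ0 𝔫 h𝔫I
        have e1 := E1 A h𝔫
        have e2 := h2 𝔫 h𝔫I
        have hempty : (∅ : Finset (Ideal (𝓞 F))) ∈ (S F (nOne F 𝔫)).powerset :=
          Finset.empty_mem_powerset _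
        have hrec : ∀ I ∈ ((S F (nOne F 𝔫)).powerset).erase ∅,
            B (idealDiv F 𝔫 (∏ v ∈ I, v ^ 2)) =
              ∑ᶠ (𝔟 : Ideal (𝓞 F)) (_ : 𝔟 ∣ nOne F (idealDiv F 𝔫 (∏ v ∈ I, v ^ 2))),
                (omega F (idealDiv F 𝔫 (∏ v ∈ I, v ^ 2)) (𝔟 ^ 2) : ℂ) *
                  A (idealDiv F (idealDiv F 𝔫 (∏ v ∈ I, v ^ 2)) (𝔟 ^ 2)) := by
          intro I hIe
          obtain ⟨hne, hIp⟩ := Finset.mem_erase.mp hIe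
          have hI := Finset.mem_powerset.mp hIp
          rw [Finset.prod_pow]
          have hcard := card_nI h𝔫 hI
          have hIc : 0 < I.card := Finset.card_pos.mpr (Finset.nonempty_iff_ne_empty.mpr hne)
          have hlt : (normalizedFactors (nOne F (idealDiv F 𝔫 ((∏ w ∈ I, w) ^ 2)))).card < k := by
            omega
          exact ih _ hlt _ (hℐup 𝔫 h𝔫I _ (nI_ne_zero h𝔫 hI) (le_nI h𝔫 hI)) rfl
        have h : (∑ I ∈ (S F (nOne F 𝔫)).powerset,
            (-1 : ℂ) ^ I.card *
              (∏ v ∈ I ∩ Sk F 1 (nOne F 𝔫), (omegav F v (nZero F 𝔫) : ℂ)) *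
              B (idealDiv F 𝔫 (∏ v ∈ I, v ^ 2))) =
            ∑ I ∈ (S F (nOne F 𝔫)).powerset,
            (-1 : ℂ) ^ I.card *
              (∏ v ∈ I ∩ Sk F 1 (nOne F 𝔫), (omegav F v (nZero F 𝔫) : ℂ)) *
              (∑ᶠ (𝔟 : Ideal (𝓞 F)) (_ : 𝔟 ∣ nOne F (idealDiv F 𝔫 (∏ v ∈ I, v ^ 2))),
                (omega F (idealDiv F 𝔫 (∏ v ∈ I, v ^ 2)) (𝔟 ^ 2) : ℂ) *
                  A (idealDiv F (idealDiv F 𝔫 (∏ v ∈ I, v ^ 2)) (𝔟 ^ 2))) :=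
          e2.symm.trans e1.symm
        rw [← Finset.add_sum_erase _ _ hempty, ← Finset.add_sum_erase _ _ hempty] at h
        have hsum : ∑ I ∈ ((S F (nOne F 𝔫)).powerset).erase ∅,
            (-1 : ℂ) ^ I.card *
              (∏ v ∈ I ∩ Sk F 1 (nOne F 𝔫), (omegav F v (nZero F 𝔫) : ℂ)) *
              B (idealDiv F 𝔫 (∏ v ∈ I, v ^ 2)) =
            ∑ I ∈ ((S F (nOne F 𝔫)).powerset).erase ∅,
            (-1 : ℂ) ^ I.card *
              (∏ v ∈ I ∩ Sk F 1 (nOne F 𝔫), (omegav F v (nZero F 𝔫) : ℂ)) *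
              (∑ᶠ (𝔟 : Ideal (𝓞 F)) (_ : 𝔟 ∣ nOne F (idealDiv F 𝔫 (∏ v ∈ I, v ^ 2))),
                (omega F (idealDiv F 𝔫 (∏ v ∈ I, v ^ 2)) (𝔟 ^ 2) : ℂ) *
                  A (idealDiv F (idealDiv F 𝔫 (∏ v ∈ I, v ^ 2)) (𝔟 ^ 2))) :=
          Finset.sum_congr rfl fun I hIe => by rw [hrec I hIe]
        rw [hsum] at h
        have hcancel := add_right_cancel h
        simp only [Finset.card_empty, pow_zero, Finset.empty_inter, Finset.prod_empty,
          one_mul, idealDiv_one] at hcancel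
        exact hcancel
    intro 𝔫 h𝔫I
    exact key _ 𝔫 h𝔫I rfl


end Stmt0
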